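/- arXiv:1502.01632 — 2 statements merged into one kernel-verified Lean document; each statement's English description precedes it below -/
import Mathlib

section
/- Let ν > 0 and let X be a Student's t random variable with ν degrees of freedom, i.e. P[X ≥ a] = C_ν ∫_a^∞ (1 + x²/ν)^{−(ν+1)/2} dx with C_ν = Γ((ν+1)/2)/(√(νπ) Γ(ν/2)). Then for every a with 0 ≤ a ≤ √(2(ν + 1.22)), one has P[X ≥ a] ≤ e^{−a²/4}. -/
open Real MeasureTheory Set

lemma my_integral_Ioi_comp_sub (f : ℝ → ℝ) (a : ℝ) :
    ∫ x in Ioi a, f (x - a) = ∫ y in Ioi (0:ℝ), f y := by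
  rw [← integral_indicator measurableSet_Ioi, ← integral_indicator measurableSet_Ioi]
  rw [show ((Ioi a).indicator fun x => f (x - a)) = fun x => (Ioi (0:ℝ)).indicator f (x - a) from ?_]
  · exact integral_sub_right_eq_self ((Ioi (0:ℝ)).indicator f) a
  · funext x
    by_cases h : x ∈ Ioi a
    · rw [indicator_of_mem h, indicator_of_mem (by simpa [mem_Ioi, sub_pos] using h)]
    · rw [indicator_of_notMem h, indicator_of_notMem (by simpa [mem_Ioi, sub_pos] using h)]

lemma my_gauss_tail {c a : ℝ} (hc : 0 < c) (ha : 0 ≤ a) :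
    ∫⁻ x in Ioi a, ENNReal.ofReal (exp (-c * x ^ 2)) ≤
      ENNReal.ofReal (exp (-c * a ^ 2) * (Real.sqrt (π / c) / 2)) := by
  have step1 : ∫⁻ x in Ioi a, ENNReal.ofReal (exp (-c * x ^ 2)) ≤
      ∫⁻ x in Ioi a, ENNReal.ofReal (exp (-c * a ^ 2) * exp (-c * (x - a) ^ 2)) := by
    refine setLIntegral_mono (by fun_prop) fun x hx => ?_
    refine ENNReal.ofReal_le_ofReal ?_
    rw [← Real.exp_add]
    refine Real.exp_le_exp.2 ?_
    have hx' : a ≤ x := (le_of_lt hx)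
    nlinarith [mul_nonneg (mul_nonneg hc.le ha) (sub_nonneg.2 hx')]
  refine step1.trans (le_of_eq ?_)
  have hint : IntegrableOn (fun x => exp (-c * a ^ 2) * exp (-c * (x - a) ^ 2)) (Ioi a) :=
    (((integrable_exp_neg_mul_sq hc).comp_sub_right a).const_mul _).integrableOn
  rw [← ofReal_integral_eq_lintegral_ofReal hint
      (Filter.Eventually.of_forall fun x => by positivity)]
  congr 1
  rw [integral_const_mul, my_integral_Ioi_comp_sub (fun y => exp (-c * y ^ 2)) a,
    integral_gaussian_Ioi]

lemma my_numeric (ν a : ℝ) (hν : 0 < ν) (ha : 0 ≤ a) (h2 : a ^ 2 ≤ 2 * (ν + 1.22)) :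
    1 / 2 * (1 + a ^ 2 / ν) ^ (-(ν / 2)) ≤ exp (-a ^ 2 / 4) := by
  have hu : 0 ≤ a ^ 2 / ν := by positivity
  have hb : (0:ℝ) < 1 + a ^ 2 / ν := by linarith
  rw [rpow_def_of_pos hb]
  have h12 : (1:ℝ) / 2 = exp (-Real.log 2) := by
    rw [Real.exp_neg, Real.exp_log (by norm_num : (0:ℝ) < 2)]; norm_num
  rw [h12, ← Real.exp_add, Real.exp_le_exp]
  set u := a ^ 2 / ν with hudef
  have hau : a ^ 2 = ν * u := by rw [hudef]; field_simp
  rw [hau] at h2 ⊢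
  rcases le_or_gt u 2 with hu2 | hu2
  · have hexp : exp (u / 2) ≤ 1 + u := by
      have hconv := convexOn_exp.2 (Set.mem_univ (0:ℝ)) (Set.mem_univ (1:ℝ))
        (by linarith : (0:ℝ) ≤ 1 - u / 2) (by linarith : (0:ℝ) ≤ u / 2) (by ring)
      have he : Real.exp 1 < 2.7182818286 := Real.exp_one_lt_d9
      simp only [smul_eq_mul, mul_zero, mul_one, zero_add, Real.exp_zero] at hconv
      nlinarith [hconv, he]
    have hlog : u / 2 ≤ Real.log (1 + u) := by
      rw [Real.le_log_iff_exp_le hb]; exact hexp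
    have hl2 : 0 ≤ Real.log 2 := Real.log_nonneg one_le_two
    nlinarith [mul_le_mul_of_nonneg_left hlog hν.le]
  · have h3 : Real.log 3 ≤ Real.log (1 + u) :=
      Real.log_le_log (by norm_num) (by linarith)
    have h3e : (1:ℝ) ≤ Real.log 3 := by
      rw [Real.le_log_iff_exp_le (by norm_num : (0:ℝ) < 3)]
      linarith [Real.exp_one_lt_d9]
    have hl2 : (0.6931471803 : ℝ) < Real.log 2 := Real.log_two_gt_d9
    have hL : (1:ℝ) ≤ Real.log (1 + u) := le_trans h3e h3
    nlinarith [mul_le_mul_of_nonneg_left hL (by linarith : (0:ℝ) ≤ ν / 2)]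

theorem student_t_tail_le_exp (ν a : ℝ) (hν : 0 < ν)
    (ha : 0 ≤ a) (ha' : a ≤ Real.sqrt (2 * (ν + 1.22)))
    (C : ℝ) (hC : C = Real.Gamma ((ν + 1) / 2) / (Real.sqrt (ν * Real.pi) * Real.Gamma (ν / 2))) :
    C * ∫ x in Set.Ioi a, (1 + x ^ 2 / ν) ^ (-(ν + 1) / 2) ≤
      Real.exp (-a ^ 2 / 4) := by
  have hs : 0 < (ν + 1) / 2 := by linarith
  set s : ℝ := (ν + 1) / 2 with hsdef
  have hc : ∀ x : ℝ, 0 < 1 + x ^ 2 / ν := fun x => by positivity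
  have hΓs : 0 < Real.Gamma s := Real.Gamma_pos_of_pos hs
  have hν2 : 0 < ν / 2 := by linarith
  have hΓν : 0 < Real.Gamma (ν / 2) := Real.Gamma_pos_of_pos hν2
  -- integrability of Gamma-type integrands
  have hint : ∀ b : ℝ, 0 < b → ∀ p : ℝ, 0 < p →
      IntegrableOn (fun t : ℝ => t ^ (p - 1) * exp (-(b * t))) (Ioi 0) := by
    intro b hb p hp
    have := integrableOn_rpow_mul_exp_neg_mul_rpow (by linarith : (-1:ℝ) < p - 1)
      (by norm_num : (0:ℝ) < 1) hb
    simpa [Real.rpow_one, neg_mul] using this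
  -- representation via Gamma integral
  have hrep : ∀ x : ℝ, (1 + x ^ 2 / ν) ^ (-(ν + 1) / 2) =
      (Real.Gamma s)⁻¹ * ∫ t in Ioi (0:ℝ), t ^ (s - 1) * exp (-((1 + x ^ 2 / ν) * t)) := by
    intro x
    rw [Real.integral_rpow_mul_exp_neg_mul_Ioi hs (hc x)]
    rw [show ((1:ℝ) / (1 + x ^ 2 / ν)) ^ s = (1 + x ^ 2 / ν) ^ (-(ν + 1) / 2) from ?_]
    · field_simp
    · rw [one_div, Real.inv_rpow (hc x).le, ← Real.rpow_neg (hc x).le]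
      congr 1
      rw [hsdef]; ring
  have hofG : ∀ x : ℝ, ENNReal.ofReal ((1 + x ^ 2 / ν) ^ (-(ν + 1) / 2)) =
      ENNReal.ofReal (Real.Gamma s)⁻¹ *
        ∫⁻ t in Ioi (0:ℝ), ENNReal.ofReal (t ^ (s - 1) * exp (-((1 + x ^ 2 / ν) * t))) := by
    intro x
    rw [hrep x, ENNReal.ofReal_mul (inv_nonneg.2 hΓs.le), ENNReal.ofReal_inv_of_pos hΓs]
    congr 1
    exact ofReal_integral_eq_lintegral_ofReal (hint _ (hc x) s hs)
      (ae_restrict_of_forall_mem measurableSet_Ioi fun t ht =>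
        mul_nonneg (Real.rpow_nonneg (le_of_lt ht) _) (Real.exp_pos _).le)
  -- swap the two integrals
  have hswap : ∫⁻ x in Ioi a, ∫⁻ t in Ioi (0:ℝ),
        ENNReal.ofReal (t ^ (s - 1) * exp (-((1 + x ^ 2 / ν) * t))) =
      ∫⁻ t in Ioi (0:ℝ), ∫⁻ x in Ioi a,
        ENNReal.ofReal (t ^ (s - 1) * exp (-((1 + x ^ 2 / ν) * t))) := by
    refine lintegral_lintegral_swap ?_
    apply Measurable.aemeasurable
    fun_prop
  -- inner bound
  have hinner : ∀ t ∈ Ioi (0:ℝ), ∫⁻ x in Ioi a,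
        ENNReal.ofReal (t ^ (s - 1) * exp (-((1 + x ^ 2 / ν) * t))) ≤
      ENNReal.ofReal (Real.sqrt (π * ν) / 2 *
        (t ^ (ν / 2 - 1) * exp (-((1 + a ^ 2 / ν) * t)))) := by
    intro t ht
    have ht' : (0:ℝ) < t := ht
    have htν : 0 < t / ν := by positivity
    have hfac : (0:ℝ) ≤ t ^ (s - 1) * exp (-t) :=
      mul_nonneg (Real.rpow_nonneg ht'.le _) (Real.exp_pos _).le
    have hsplit : ∀ x : ℝ, t ^ (s - 1) * exp (-((1 + x ^ 2 / ν) * t)) =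
        (t ^ (s - 1) * exp (-t)) * exp (-(t / ν) * x ^ 2) := by
      intro x
      rw [show (-((1 + x ^ 2 / ν) * t)) = -t + -(t / ν) * x ^ 2 by ring, Real.exp_add]
      ring
    simp_rw [hsplit, ENNReal.ofReal_mul hfac]
    rw [lintegral_const_mul' _ _ ENNReal.ofReal_ne_top]
    calc ENNReal.ofReal (t ^ (s - 1) * exp (-t)) *
          ∫⁻ x in Ioi a, ENNReal.ofReal (exp (-(t / ν) * x ^ 2))
        ≤ ENNReal.ofReal (t ^ (s - 1) * exp (-t)) *
          ENNReal.ofReal (exp (-(t / ν) * a ^ 2) * (Real.sqrt (π / (t / ν)) / 2)) :=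
          mul_le_mul_right (my_gauss_tail htν ha) _
      _ = ENNReal.ofReal (Real.sqrt (π * ν) / 2 *
            (t ^ (ν / 2 - 1) * exp (-((1 + a ^ 2 / ν) * t)))) := by
          rw [← ENNReal.ofReal_mul hfac]
          congr 1
          have hsq : Real.sqrt (π / (t / ν)) = Real.sqrt (π * ν) / Real.sqrt t := by
            rw [div_div_eq_mul_div, Real.sqrt_div (by positivity) t]
          have hrt : t ^ (s - 1) / Real.sqrt t = t ^ (ν / 2 - 1) := by
            rw [Real.sqrt_eq_rpow, ← Real.rpow_sub ht']
            congr 1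
            rw [hsdef]; ring
          have hexp2 : exp (-t) * exp (-(t / ν) * a ^ 2) = exp (-((1 + a ^ 2 / ν) * t)) := by
            rw [← Real.exp_add]
            congr 1
            ring
          calc (t ^ (s - 1) * exp (-t)) *
                (exp (-(t / ν) * a ^ 2) * (Real.sqrt (π / (t / ν)) / 2))
              = Real.sqrt (π * ν) / 2 *
                ((t ^ (s - 1) / Real.sqrt t) * (exp (-t) * exp (-(t / ν) * a ^ 2))) := by
                rw [hsq]; ring
            _ = Real.sqrt (π * ν) / 2 *
                (t ^ (ν / 2 - 1) * exp (-((1 + a ^ 2 / ν) * t))) := by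
                rw [hrt, hexp2]
  -- outer integral
  have houter : ∫⁻ t in Ioi (0:ℝ), ENNReal.ofReal (Real.sqrt (π * ν) / 2 *
        (t ^ (ν / 2 - 1) * exp (-((1 + a ^ 2 / ν) * t)))) =
      ENNReal.ofReal (Real.sqrt (π * ν) / 2 *
        ((1 / (1 + a ^ 2 / ν)) ^ (ν / 2) * Real.Gamma (ν / 2))) := by
    have hnn : (0:ℝ) ≤ Real.sqrt (π * ν) / 2 := by positivity
    simp_rw [ENNReal.ofReal_mul hnn]
    rw [lintegral_const_mul' _ _ ENNReal.ofReal_ne_top,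
      ← ofReal_integral_eq_lintegral_ofReal (hint _ (hc a) (ν / 2) hν2)
        (ae_restrict_of_forall_mem measurableSet_Ioi fun t ht =>
          mul_nonneg (Real.rpow_nonneg (le_of_lt ht) _) (Real.exp_pos _).le),
      Real.integral_rpow_mul_exp_neg_mul_Ioi hν2 (hc a)]
  -- put it together
  have hfnn : ∀ x : ℝ, 0 ≤ (1 + x ^ 2 / ν) ^ (-(ν + 1) / 2) :=
    fun x => Real.rpow_nonneg (hc x).le _
  have hfm : AEStronglyMeasurable (fun x : ℝ => (1 + x ^ 2 / ν) ^ (-(ν + 1) / 2))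
      (volume.restrict (Ioi a)) := by
    apply Measurable.aestronglyMeasurable
    fun_prop
  have h1 : ∫ x in Ioi a, (1 + x ^ 2 / ν) ^ (-(ν + 1) / 2) =
      (∫⁻ x in Ioi a, ENNReal.ofReal ((1 + x ^ 2 / ν) ^ (-(ν + 1) / 2))).toReal :=
    integral_eq_lintegral_of_nonneg_ae (Filter.Eventually.of_forall fun x => hfnn x) hfm
  set R : ℝ := (Real.Gamma s)⁻¹ * (Real.sqrt (π * ν) / 2 *
    ((1 / (1 + a ^ 2 / ν)) ^ (ν / 2) * Real.Gamma (ν / 2))) with hRdef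
  have hRnn : 0 ≤ R := by
    rw [hRdef]
    have := hΓs.le
    have := hΓν.le
    positivity
  have hlin : ∫⁻ x in Ioi a, ENNReal.ofReal ((1 + x ^ 2 / ν) ^ (-(ν + 1) / 2)) ≤
      ENNReal.ofReal R := by
    calc ∫⁻ x in Ioi a, ENNReal.ofReal ((1 + x ^ 2 / ν) ^ (-(ν + 1) / 2))
        = ENNReal.ofReal (Real.Gamma s)⁻¹ *
          ∫⁻ x in Ioi a, ∫⁻ t in Ioi (0:ℝ),
            ENNReal.ofReal (t ^ (s - 1) * exp (-((1 + x ^ 2 / ν) * t))) := by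
          simp_rw [hofG]
          rw [lintegral_const_mul' _ _ (by simp)]
      _ = ENNReal.ofReal (Real.Gamma s)⁻¹ *
          ∫⁻ t in Ioi (0:ℝ), ∫⁻ x in Ioi a,
            ENNReal.ofReal (t ^ (s - 1) * exp (-((1 + x ^ 2 / ν) * t))) := by rw [hswap]
      _ ≤ ENNReal.ofReal (Real.Gamma s)⁻¹ *
          ∫⁻ t in Ioi (0:ℝ), ENNReal.ofReal (Real.sqrt (π * ν) / 2 *
            (t ^ (ν / 2 - 1) * exp (-((1 + a ^ 2 / ν) * t)))) :=
          mul_le_mul_right (setLIntegral_mono (by fun_prop) hinner) _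
      _ = ENNReal.ofReal R := by
          rw [houter, hRdef, ENNReal.ofReal_mul (inv_nonneg.2 hΓs.le),
            ENNReal.ofReal_inv_of_pos hΓs]
  have hT : ∫ x in Ioi a, (1 + x ^ 2 / ν) ^ (-(ν + 1) / 2) ≤ R := by
    rw [h1]
    exact ENNReal.toReal_le_of_le_ofReal hRnn hlin
  have hCnn : 0 ≤ C := by
    rw [hC]
    have h1 := hΓs.le
    have h2 := hΓν.le
    have h3 : 0 < ν * π := by positivity
    rw [hsdef] at h1
    positivity
  have hCR : C * R = 1 / 2 * (1 + a ^ 2 / ν) ^ (-(ν / 2)) := by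
    have h1c : ((1:ℝ) / (1 + a ^ 2 / ν)) ^ (ν / 2) = (1 + a ^ 2 / ν) ^ (-(ν / 2)) := by
      rw [one_div, Real.inv_rpow (hc a).le, ← Real.rpow_neg (hc a).le]
    have hsν : Real.sqrt (ν * π) = Real.sqrt (π * ν) := by rw [mul_comm]
    rw [hRdef, hC, h1c, hsν]
    have h4 : Real.sqrt (π * ν) ≠ 0 := by positivity
    field_simp
  have ha2 : a ^ 2 ≤ 2 * (ν + 1.22) := by
    have hM : (0:ℝ) ≤ 2 * (ν + 1.22) := by linarith
    nlinarith [Real.sq_sqrt hM, Real.sqrt_nonneg (2 * (ν + 1.22))]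
  calc C * ∫ x in Set.Ioi a, (1 + x ^ 2 / ν) ^ (-(ν + 1) / 2)
      ≤ C * R := mul_le_mul_of_nonneg_left hT hCnn
    _ = 1 / 2 * (1 + a ^ 2 / ν) ^ (-(ν / 2)) := hCR
    _ ≤ exp (-a ^ 2 / 4) := my_numeric ν a hν ha ha2
end

section
/- Let ν > 0 and let X be a Student's t random variable with ν degrees of freedom, i.e. P[X ≥ a] = C_ν ∫_a^∞ (1 + x²/ν)^{−(ν+1)/2} dx with C_ν = Γ((ν+1)/2)/(√(νπ) Γ(ν/2)). Then for every a ≥ 0, with K = 0.543, one has P[X ≥ a] ≤ e^{log K − a²ν/(a² + 2ν)}. -/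
open Real MeasureTheory Set

lemma aux_hasDeriv (y : ℝ) (h1 : (0:ℝ) < 1 + y) (h2 : (0:ℝ) < y + 2) :
    HasDerivAt (fun y : ℝ => Real.log (1+y) - 2*y/(y+2)) (1/(1+y) - 4/(y+2)^2) y := by
  have d1 : HasDerivAt (fun y : ℝ => Real.log (1+y)) (1/(1+y)) y := by
    simpa using ((hasDerivAt_id y).const_add 1).log h1.ne'
  have d2 : HasDerivAt (fun y : ℝ => 2*y/(y+2)) (4/(y+2)^2) y := by
    have := ((hasDerivAt_id y).const_mul 2).div ((hasDerivAt_id y).add_const 2) h2.ne'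
    refine this.congr_deriv ?_
    simp only [id]
    field_simp
    ring
  exact d1.sub d2

lemma aux_log (x : ℝ) (hx : 0 ≤ x) : 2*x/(x+2) ≤ Real.log (1+x) := by
  have key : MonotoneOn (fun y : ℝ => Real.log (1+y) - 2*y/(y+2)) (Ici 0) := by
    apply monotoneOn_of_deriv_nonneg (convex_Ici 0)
    · apply ContinuousOn.sub
      · exact (continuousOn_const.add continuousOn_id).log (fun y hy => by
          simp only [mem_Ici] at hy; exact (show (0:ℝ) < 1 + y by linarith).ne')
      · exact (continuousOn_const.mul continuousOn_id).div
          (continuousOn_id.add continuousOn_const) (fun y hy => by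
            simp only [mem_Ici] at hy; positivity)
    · intro y hy
      rw [interior_Ici, mem_Ioi] at hy
      exact (aux_hasDeriv y (by linarith) (by linarith)).differentiableAt.differentiableWithinAt
    · intro y hy
      rw [interior_Ici, mem_Ioi] at hy
      have h1 : (0:ℝ) < 1 + y := by linarith
      have h2 : (0:ℝ) < y + 2 := by linarith
      rw [(aux_hasDeriv y h1 h2).deriv]
      rw [sub_nonneg, div_le_div_iff₀ (by positivity) h1]
      nlinarith [sq_nonneg y]
  have := key (mem_Ici.mpr le_rfl) (mem_Ici.mpr hx) hx
  simp only [Real.log_one, mul_zero, zero_div, zero_add, add_zero] at this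
  linarith [this]


-- change of variables: ∫_{Ioo 0 1} x^(-1/2) (1-x)^(ν/2-1) dx = 2 ∫_{Ioi 0} (1+u²)^(-(ν+1)/2) du
lemma aux_cov (ν : ℝ) (hν : 0 < ν) :
    ∫ x in Ioo (0:ℝ) 1, x ^ (-(1:ℝ)/2) * (1-x) ^ (ν/2-1) =
      2 * ∫ u in Ioi (0:ℝ), (1+u^2) ^ (-(ν+1)/2) := by
  have himg : (fun u : ℝ => u^2/(1+u^2)) '' Ioi 0 = Ioo 0 1 := by
    ext y
    constructor
    · rintro ⟨u, hu, rfl⟩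
      rw [mem_Ioi] at hu
      have h1 : (0:ℝ) < 1 + u^2 := by positivity
      constructor
      · positivity
      · rw [div_lt_one h1]; linarith
    · rintro ⟨hy0, hy1⟩
      refine ⟨Real.sqrt (y/(1-y)), ?_, ?_⟩
      · rw [mem_Ioi]
        apply Real.sqrt_pos.mpr
        apply div_pos hy0 (by linarith)
      · show Real.sqrt (y/(1-y)) ^ 2 / (1 + Real.sqrt (y/(1-y)) ^ 2) = y
        rw [Real.sq_sqrt (le_of_lt (div_pos hy0 (by linarith)))]
        have : (1:ℝ) - y ≠ 0 := by linarith
        field_simp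
        ring
  have hderiv : ∀ u ∈ Ioi (0:ℝ), HasDerivWithinAt (fun u : ℝ => u^2/(1+u^2))
      (2*u/(1+u^2)^2) (Ioi 0) u := by
    intro u hu
    have h1 : (0:ℝ) < 1 + u^2 := by positivity
    have hd : HasDerivAt (fun u : ℝ => u^2/(1+u^2)) (2*u/(1+u^2)^2) u := by
      have := (hasDerivAt_pow 2 u).div ((hasDerivAt_pow 2 u).const_add 1) h1.ne'
      refine this.congr_deriv ?_
      push_cast
      ring
    exact hd.hasDerivWithinAt
  have hinj : InjOn (fun u : ℝ => u^2/(1+u^2)) (Ioi 0) := by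
    have hmono : StrictMonoOn (fun u : ℝ => u^2/(1+u^2)) (Ioi 0) := by
      intro u hu v hv huv
      rw [mem_Ioi] at hu hv
      have h1 : (0:ℝ) < 1 + u^2 := by positivity
      have h2 : (0:ℝ) < 1 + v^2 := by positivity
      rw [div_lt_div_iff₀ h1 h2]
      nlinarith
    exact hmono.injOn
  have := MeasureTheory.integral_image_eq_integral_abs_deriv_smul measurableSet_Ioi hderiv hinj
    (fun x : ℝ => x ^ (-(1:ℝ)/2) * (1-x) ^ (ν/2-1))
  rw [himg] at this
  rw [this, ← integral_const_mul]
  apply setIntegral_congr_fun measurableSet_Ioi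
  intro u hu
  rw [mem_Ioi] at hu
  have h1 : (0:ℝ) < 1 + u^2 := by positivity
  have eA : (u^2/(1+u^2) : ℝ) ^ (-(1:ℝ)/2) = u⁻¹ * (1+u^2) ^ ((1:ℝ)/2) := by
    rw [Real.div_rpow (by positivity) h1.le]
    have h2 : (u^2 : ℝ) ^ (-(1:ℝ)/2) = u⁻¹ := by
      rw [← Real.rpow_natCast u 2, ← Real.rpow_mul hu.le]
      norm_num [Real.rpow_neg_one]
    rw [h2, show (-(1:ℝ)/2) = -(1/2) by norm_num, Real.rpow_neg h1.le, div_inv_eq_mul]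
  have eB : ((1+u^2)⁻¹ : ℝ) ^ (ν/2-1) = (1+u^2) ^ (1-ν/2) := by
    rw [← Real.rpow_neg_one (1+u^2), ← Real.rpow_mul h1.le]
    congr 1; ring
  have eC : ((1+u^2)^2 : ℝ) = (1+u^2) ^ ((2:ℝ)) := by
    rw [← Real.rpow_natCast (1+u^2) 2]; norm_num
  have eD : (1+u^2) ^ ((1:ℝ)/2) * (1+u^2) ^ (1-ν/2) / (1+u^2) ^ ((2:ℝ))
      = (1+u^2) ^ (-(ν+1)/2) := by
    rw [← Real.rpow_add h1, div_eq_mul_inv, ← Real.rpow_neg h1.le, ← Real.rpow_add h1]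
    congr 1; ring
  have e0 : (1:ℝ) - u^2/(1+u^2) = (1+u^2)⁻¹ := by field_simp; ring
  show |2*u/(1+u^2)^2| • ((u^2/(1+u^2)) ^ (-(1:ℝ)/2) * (1 - u^2/(1+u^2)) ^ (ν/2-1))
      = 2 * (1+u^2) ^ (-(ν+1)/2)
  rw [e0, eA, eB, smul_eq_mul, abs_of_pos (by positivity)]
  calc 2*u/(1+u^2)^2 * (u⁻¹ * (1+u^2) ^ ((1:ℝ)/2) * (1+u^2) ^ (1-ν/2))
      = (u * u⁻¹) * (2 * ((1+u^2) ^ ((1:ℝ)/2) * (1+u^2) ^ (1-ν/2) / (1+u^2)^2)) := by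
        ring
    _ = 2 * (1+u^2) ^ (-(ν+1)/2) := by
        rw [mul_inv_cancel₀ hu.ne', one_mul, eC, eD]

lemma aux_beta (ν : ℝ) (hν : 0 < ν) :
    ∫ u in Ioi (0:ℝ), (1+u^2) ^ (-(ν+1)/2) =
      Real.sqrt π * Real.Gamma (ν/2) / (2 * Real.Gamma ((ν+1)/2)) := by
  have hb := Complex.Gamma_mul_Gamma_eq_betaIntegral
    (s := 1/2) (t := (ν:ℂ)/2) (by norm_num) (by simp [Complex.div_re]; positivity)
  have hbeta : Complex.betaIntegral (1/2) ((ν:ℂ)/2) =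
      ((∫ x in Ioo (0:ℝ) 1, x ^ (-(1:ℝ)/2) * (1-x) ^ (ν/2-1) : ℝ) : ℂ) := by
    rw [Complex.betaIntegral, intervalIntegral.integral_of_le zero_le_one,
      MeasureTheory.integral_Ioc_eq_integral_Ioo,
      show ((∫ x in Ioo (0:ℝ) 1, x ^ (-(1:ℝ)/2) * (1-x) ^ (ν/2-1) : ℝ) : ℂ) =
        ∫ x in Ioo (0:ℝ) 1, (((x ^ (-(1:ℝ)/2) * (1-x) ^ (ν/2-1) : ℝ)) : ℂ)
      from (integral_ofReal (𝕜 := ℂ)).symm]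
    apply setIntegral_congr_fun measurableSet_Ioo
    intro x hx
    obtain ⟨hx0, hx1⟩ := hx
    have e1 : ((x:ℂ)) ^ ((1:ℂ)/2 - 1) = ((x ^ (-(1:ℝ)/2) : ℝ) : ℂ) := by
      rw [Complex.ofReal_cpow hx0.le]
      norm_num
    have e2 : ((1:ℂ) - (x:ℂ)) ^ ((ν:ℂ)/2 - 1) = (((1-x) ^ (ν/2-1) : ℝ) : ℂ) := by
      rw [show ((1:ℂ) - (x:ℂ)) = (((1-x : ℝ)) : ℂ) by push_cast; ring,
        Complex.ofReal_cpow (by linarith)]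
      push_cast
      ring_nf
    dsimp only
    rw [e1, e2]
    push_cast
    ring
  rw [hbeta, aux_cov ν hν] at hb
  have hcast : (Complex.Gamma ((1:ℂ)/2)) = ((Real.Gamma (1/2) : ℝ) : ℂ) := by
    rw [show ((1:ℂ)/2) = (((1/2 : ℝ)) : ℂ) by norm_num, Complex.Gamma_ofReal]
  have hcast2 : (Complex.Gamma ((ν:ℂ)/2)) = ((Real.Gamma (ν/2) : ℝ) : ℂ) := by
    rw [show ((ν:ℂ)/2) = (((ν/2 : ℝ)) : ℂ) by push_cast; ring, Complex.Gamma_ofReal]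
  have hcast3 : (Complex.Gamma ((1:ℂ)/2 + (ν:ℂ)/2)) = ((Real.Gamma ((ν+1)/2) : ℝ) : ℂ) := by
    rw [show ((1:ℂ)/2 + (ν:ℂ)/2) = (((ν+1)/2 : ℝ) : ℂ) by push_cast; ring, Complex.Gamma_ofReal]
  rw [hcast, hcast2, hcast3] at hb
  have hreal : Real.Gamma (1/2) * Real.Gamma (ν/2) =
      Real.Gamma ((ν+1)/2) * (2 * ∫ u in Ioi (0:ℝ), (1+u^2) ^ (-(ν+1)/2)) := by
    exact_mod_cast hb
  have hG : 0 < Real.Gamma ((ν+1)/2) := Real.Gamma_pos_of_pos (by linarith)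
  rw [Real.Gamma_one_half_eq] at hreal
  rw [eq_div_iff (by positivity)]
  linarith [hreal]

lemma aux_anti (p A B : ℝ) (hp : 0 ≤ p) (hA : 0 < A) (hAB : A ≤ B) : B ^ (-p) ≤ A ^ (-p) := by
  rw [Real.rpow_neg hA.le, Real.rpow_neg (hA.trans_le hAB).le]
  exact inv_anti₀ (Real.rpow_pos_of_pos hA p) (Real.rpow_le_rpow hA.le hAB hp)

lemma aux_integrable (p w : ℝ) (hp : 0 < p) (h2p : 1 < 2*p) (hw : 0 < w) :
    IntegrableOn (fun u : ℝ => (1+u^2/w) ^ (-p)) (Ioi 0) := by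
  have hpos : ∀ u : ℝ, (0:ℝ) < 1 + u^2/w := fun u => by positivity
  have hcont : Continuous fun u : ℝ => (1+u^2/w) ^ (-p) :=
    (continuous_const.add ((continuous_pow 2).div_const w)).rpow_const
      (fun x => Or.inl (hpos x).ne')
  rw [← Ioc_union_Ioi_eq_Ioi (zero_le_one (α := ℝ))]
  apply IntegrableOn.union
  · exact hcont.integrableOn_Ioc
  · apply Integrable.mono'
      (((integrableOn_Ioi_rpow_of_lt (show -(2*p) < -1 by linarith) one_pos)).const_mul (w^p))
    · exact hcont.aestronglyMeasurable.restrict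
    · rw [ae_restrict_iff' measurableSet_Ioi]
      apply ae_of_all
      intro x hx
      rw [mem_Ioi] at hx
      have hx0 : (0:ℝ) < x := by linarith
      rw [Real.norm_eq_abs, abs_of_nonneg (Real.rpow_nonneg (hpos x).le _)]
      have h1 : ((x^2/w : ℝ)) ^ (-p) = w^p * x ^ (-(2*p)) := by
        rw [Real.div_rpow (sq_nonneg x) hw.le, Real.rpow_neg hw.le, div_inv_eq_mul]
        rw [← Real.rpow_natCast x 2, ← Real.rpow_mul hx0.le]
        rw [show ((2:ℕ):ℝ) * (-p) = -(2*p) by push_cast; ring]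
        ring
      calc (1+x^2/w) ^ (-p) ≤ (x^2/w) ^ (-p) :=
            aux_anti p _ _ hp.le (by positivity) (by linarith)
        _ = w^p * x ^ (-(2*p)) := h1


set_option maxHeartbeats 2000000 in
theorem student_t_tail_le_exp_log_k (ν a : ℝ) (hν : 0 < ν) (ha : 0 ≤ a)
    (C : ℝ) (hC : C = Real.Gamma ((ν + 1) / 2) / (Real.sqrt (ν * Real.pi) * Real.Gamma (ν / 2)))
    (K : ℝ) (hK : K = 0.543) :
    C * ∫ x in Set.Ioi a, (1 + x ^ 2 / ν) ^ (-(ν + 1) / 2) ≤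
      Real.exp (Real.log K - a ^ 2 * ν / (a ^ 2 + 2 * ν)) := by
  have hp2 : (0:ℝ) < (ν+1)/2 := by linarith
  have h2p : (1:ℝ) < 2*((ν+1)/2) := by linarith
  have hB : (0:ℝ) < 1 + a^2/ν := by positivity
  have hw : (0:ℝ) < ν + a^2 := by positivity
  have hGn : 0 < Real.Gamma ((ν+1)/2) := Real.Gamma_pos_of_pos hp2
  have hGd : 0 < Real.Gamma (ν/2) := Real.Gamma_pos_of_pos (by linarith)
  have hsπ : (0:ℝ) < Real.sqrt π := Real.sqrt_pos.mpr Real.pi_pos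
  have hsν : (0:ℝ) < Real.sqrt ν := Real.sqrt_pos.mpr hν
  have hCpos : 0 < C := by
    rw [hC, Real.sqrt_mul hν.le]
    positivity
  simp only [show (-(ν+1)/2 : ℝ) = -((ν+1)/2) by ring]
  set p := (ν+1)/2 with hp
  set w := ν + a^2 with hwdef
  -- image of translation
  have himg : (fun t : ℝ => t + a) '' Ioi 0 = Ioi a := by
    ext x
    constructor
    · rintro ⟨t, ht, rfl⟩; rw [mem_Ioi] at ht; simpa using ht
    · intro hx; rw [mem_Ioi] at hx; exact ⟨x - a, by rw [mem_Ioi]; linarith, by ring⟩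
  have hd : ∀ x ∈ Ioi (0:ℝ), HasDerivWithinAt (fun t : ℝ => t + a) 1 (Ioi 0) x :=
    fun x _ => ((hasDerivAt_id x).add_const a).hasDerivWithinAt
  have hinj : InjOn (fun t : ℝ => t + a) (Ioi 0) := fun x _ y _ h => by
    simpa using h
  -- integrabilities
  have hIf : IntegrableOn (fun x : ℝ => (1+x^2/ν) ^ (-p)) (Ioi a) :=
    (aux_integrable p ν hp2 h2p hν).mono_set (Ioi_subset_Ioi ha)
  have hIg0 : IntegrableOn (fun t : ℝ => (1+t^2/w) ^ (-p)) (Ioi 0) :=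
    aux_integrable p w hp2 h2p hw
  have hIg : IntegrableOn (fun x : ℝ => (1+(x-a)^2/w) ^ (-p)) (Ioi a) := by
    rw [← himg, integrableOn_image_iff_integrableOn_abs_deriv_smul measurableSet_Ioi hd hinj]
    simpa using hIg0
  -- translation identity
  have htrans : ∫ x in Ioi a, (1+(x-a)^2/w) ^ (-p) = ∫ t in Ioi 0, (1+t^2/w) ^ (-p) := by
    rw [← himg, integral_image_eq_integral_abs_deriv_smul measurableSet_Ioi hd hinj
      (fun x : ℝ => (1+(x-a)^2/w) ^ (-p))]
    apply setIntegral_congr_fun measurableSet_Ioi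
    intro t _
    simp
  -- pointwise bound and integral comparison
  have step1 : ∫ x in Ioi a, (1+x^2/ν) ^ (-p) ≤
      (1+a^2/ν) ^ (-p) * ∫ t in Ioi 0, (1+t^2/w) ^ (-p) := by
    rw [← htrans, ← MeasureTheory.integral_const_mul]
    apply setIntegral_mono_on hIf (hIg.const_mul _) measurableSet_Ioi
    intro x hx
    rw [mem_Ioi] at hx
    have hxa : 0 ≤ x - a := by linarith
    have hX : (0:ℝ) < 1 + (x-a)^2/w := by positivity
    have hprod : (1+a^2/ν) * (1+(x-a)^2/w) ≤ 1 + x^2/ν := by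
      have hexp : (1+a^2/ν) * (1+(x-a)^2/w) = (w + (x-a)^2)/ν := by
        rw [hwdef]; field_simp
      have hexp2 : (1:ℝ) + x^2/ν = (ν + x^2)/ν := by field_simp
      rw [hexp, hexp2]
      rw [div_le_div_iff₀ hν hν, hwdef]
      nlinarith [mul_nonneg ha hxa]
    calc (1+x^2/ν) ^ (-p) ≤ ((1+a^2/ν) * (1+(x-a)^2/w)) ^ (-p) :=
          aux_anti p _ _ hp2.le (by positivity) hprod
      _ = (1+a^2/ν) ^ (-p) * (1+(x-a)^2/w) ^ (-p) :=
          Real.mul_rpow hB.le hX.le ▸ rfl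
  -- scaling
  have hsw : (0:ℝ) < Real.sqrt w := Real.sqrt_pos.mpr hw
  have hscale : ∫ t in Ioi (0:ℝ), (1+t^2/w) ^ (-p) =
      Real.sqrt w * ∫ u in Ioi (0:ℝ), (1+u^2) ^ (-p) := by
    have h := integral_comp_mul_left_Ioi (fun u : ℝ => (1+u^2) ^ (-p)) 0 (inv_pos.mpr hsw)
    simp only [mul_zero, inv_inv, smul_eq_mul] at h
    rw [← h]
    apply setIntegral_congr_fun measurableSet_Ioi
    intro t _
    dsimp only
    rw [show ((Real.sqrt w)⁻¹ * t)^2 = t^2/w by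
      rw [mul_pow, inv_pow, Real.sq_sqrt hw.le]; ring]
  have hbeta := aux_beta ν hν
  rw [show (-(ν+1)/2 : ℝ) = -((ν+1)/2) by ring, ← hp] at hbeta
  -- constant computation
  have hwsplit : Real.sqrt w = Real.sqrt ν * Real.sqrt (1+a^2/ν) := by
    rw [show w = ν * (1+a^2/ν) by rw [hwdef]; field_simp, Real.sqrt_mul hν.le]
  have chain : C * ∫ x in Ioi a, (1+x^2/ν) ^ (-p) ≤
      1/2 * ((1+a^2/ν) ^ (-p) * Real.sqrt (1+a^2/ν)) := by
    have h1 := mul_le_mul_of_nonneg_left step1 hCpos.le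
    rw [hscale, hbeta, hwsplit] at h1
    refine h1.trans_eq ?_
    rw [hC, Real.sqrt_mul hν.le]
    field_simp
  have hBpow : (1+a^2/ν) ^ (-p) * Real.sqrt (1+a^2/ν) = (1+a^2/ν) ^ (-(ν/2)) := by
    rw [Real.sqrt_eq_rpow, ← Real.rpow_add hB]
    congr 1
    rw [hp]; ring
  have hexp : (1+a^2/ν) ^ (-(ν/2)) ≤ Real.exp (-(a^2*ν/(a^2+2*ν))) := by
    rw [Real.rpow_def_of_pos hB]
    apply Real.exp_le_exp.mpr
    have hl := aux_log (a^2/ν) (by positivity)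
    have heq : ν/2 * (2*(a^2/ν)/(a^2/ν+2)) = a^2*ν/(a^2+2*ν) := by
      have h2 : (0:ℝ) < a^2 + 2*ν := by positivity
      field_simp
    nlinarith [mul_le_mul_of_nonneg_left hl (by linarith : (0:ℝ) ≤ ν/2)]
  calc C * ∫ x in Ioi a, (1+x^2/ν) ^ (-p)
      ≤ 1/2 * ((1+a^2/ν) ^ (-p) * Real.sqrt (1+a^2/ν)) := chain
    _ = 1/2 * (1+a^2/ν) ^ (-(ν/2)) := by rw [hBpow]
    _ ≤ 1/2 * Real.exp (-(a^2*ν/(a^2+2*ν))) :=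
        mul_le_mul_of_nonneg_left hexp (by norm_num)
    _ ≤ Real.exp (Real.log K - a^2*ν/(a^2+2*ν)) := by
        rw [Real.exp_sub, Real.exp_log (by rw [hK]; norm_num), Real.exp_neg, hK,
          div_eq_mul_inv (0.543:ℝ)]
        exact mul_le_mul_of_nonneg_right (by norm_num)
          (inv_nonneg.mpr (Real.exp_pos _).le)
end
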